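/- Let N be an ωPN and remIω(N) the ωPN obtained by replacing every ω-labeled input value by 0 (i.e., I′(t)(p) = 0 whenever I(t)(p) = ω and I′(t)(p) = I(t)(p) otherwise, outputs unchanged). Then: (a) every execution m₀,t₁′,m₁,…,tₙ′,mₙ of remIω(N) is also an execution of N (with the corresponding transitions); (b) for every execution m₀,t₁,m₁,…,tₙ,mₙ of N there is an execution m₀,t₁′,m₁′,…,tₙ′,mₙ′ of remIω(N) with m_i ≼ m_i′ for all i. Consequently, N terminates iff remIω(N) terminates. -/
import Mathlib


/-- An ω-Petri net over a set of places `P`: a set `T` of transitions,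
each with input and output valuations in ℕ ∪ {ω} (modelled as `WithTop ℕ`). -/
structure OmegaPN (P : Type) where
  T : Type
  I : T → P → WithTop ℕ
  O : T → P → WithTop ℕ

namespace OmegaPN

variable {P : Type}

/-- Concrete firing: `t` is firable from `m` (i.e. `m p ≥ I t p` whenever
`I t p ≠ ω`) and `m'` is obtained by consuming `i p` tokens (with `i p = I t p`
if finite, an arbitrary value `≤ m p` if `I t p = ω`) and producing `o p` tokens
(with `o p = O t p` if finite, arbitrary if `O t p = ω`) in each place `p`. -/
def Fires (N : OmegaPN P) (t : N.T) (m m' : P → ℕ) : Prop :=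
  ∃ i o : P → ℕ,
    (∀ p, N.I t p ≠ ⊤ → (i p : WithTop ℕ) = N.I t p) ∧
    (∀ p, N.O t p ≠ ⊤ → (o p : WithTop ℕ) = N.O t p) ∧
    (∀ p, i p ≤ m p) ∧
    (∀ p, m' p = m p - i p + o p)

/-- `m →σ m'` : firing the finite sequence `σ` of transitions from `m` can yield `m'`. -/
inductive FiresSeq (N : OmegaPN P) : List N.T → (P → ℕ) → (P → ℕ) → Prop
  | nil (m : P → ℕ) : FiresSeq N [] m m
  | cons {t : N.T} {σ : List N.T} {m m₁ m₂ : P → ℕ} :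
      N.Fires t m m₁ → FiresSeq N σ m₁ m₂ → FiresSeq N (t :: σ) m m₂

end OmegaPN

open OmegaPN

/-- `remIω(N)`: replace every ω-labeled input value by `0`, outputs unchanged. -/
def OmegaPN.remIw {P : Type} (N : OmegaPN P) : OmegaPN P where
  T := N.T
  I := fun t p => if N.I t p = ⊤ then 0 else N.I t p
  O := N.O

lemma remIw_fires {P : Type} {N : OmegaPN P} {t : N.T} {m m' : P → ℕ}
    (h : N.remIw.Fires t m m') : N.Fires t m m' := by
  obtain ⟨i, o, hi, ho, hle, hm⟩ := h
  refine ⟨i, o, ?_, ho, hle, hm⟩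
  intro p hp
  have hne : N.remIw.I t p ≠ ⊤ := by
    simp only [OmegaPN.remIw]
    split <;> simp_all
  have := hi p hne
  simpa [OmegaPN.remIw, hp] using this

lemma remIw_firesSeq {P : Type} {N : OmegaPN P} {σ : List N.T} {m m' : P → ℕ}
    (h : N.remIw.FiresSeq σ m m') : N.FiresSeq σ m m' :=
  @OmegaPN.FiresSeq.rec P N.remIw (fun σ m m' _ => N.FiresSeq σ m m')
    (fun m => .nil m)
    (fun h1 _ ih => .cons (remIw_fires h1) ih) σ m m' h

lemma remIw_stepB {P : Type} {N : OmegaPN P} {t : N.T} {m m₁ m'' : P → ℕ}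
    (h : N.Fires t m m₁) (hle : ∀ p, m p ≤ m'' p) :
    ∃ m₁', N.remIw.Fires t m'' m₁' ∧ ∀ p, m₁ p ≤ m₁' p := by
  obtain ⟨i, o, hi, ho, hile, hm⟩ := h
  refine ⟨fun p => m'' p - (if N.I t p = ⊤ then 0 else i p) + o p,
    ⟨fun p => if N.I t p = ⊤ then 0 else i p, o, ?_, ho, ?_, fun p => rfl⟩, ?_⟩
  · intro p _
    by_cases hp : N.I t p = ⊤
    · simp [OmegaPN.remIw, hp]
    · simpa [OmegaPN.remIw, hp] using hi p hp
  · intro p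
    by_cases hp : N.I t p = ⊤
    · simp [hp]
    · simpa [hp] using (hile p).trans (hle p)
  · intro p
    show m₁ p ≤ m'' p - (if N.I t p = ⊤ then 0 else i p) + o p
    have h1 : (if N.I t p = ⊤ then 0 else i p) ≤ i p := by split <;> omega
    have := hile p
    have := hle p
    rw [hm p]
    omega

open Classical in
/-- auxiliary dominating chain -/
noncomputable def remIwChain {P : Type} (N : OmegaPN P) (ts : ℕ → N.T)
    (ms : ℕ → P → ℕ) : ℕ → P → ℕ
  | 0 => ms 0
  | i + 1 =>
    if h : ∃ m', N.remIw.Fires (ts i) (remIwChain N ts ms i) m' ∧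
        ∀ p, ms (i + 1) p ≤ m' p then h.choose else ms (i + 1)

lemma remIwChain_spec {P : Type} (N : OmegaPN P) (ts : ℕ → N.T)
    (ms : ℕ → P → ℕ) (n : ℕ) (h : ∀ i < n, N.Fires (ts i) (ms i) (ms (i + 1))) :
    (∀ i < n, N.remIw.Fires (ts i) (remIwChain N ts ms i) (remIwChain N ts ms (i + 1))) ∧
    ∀ i ≤ n, ∀ p, ms i p ≤ remIwChain N ts ms i p := by
  induction n with
  | zero =>
    refine ⟨fun i hi => absurd hi (by omega), fun i hi p => ?_⟩
    interval_cases i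
    simp [remIwChain]
  | succ n ih =>
    obtain ⟨ih1, ih2⟩ := ih (fun i hi => h i (by omega))
    have hdom : ∀ p, ms n p ≤ remIwChain N ts ms n p := ih2 n le_rfl
    have hex : ∃ m', N.remIw.Fires (ts n) (remIwChain N ts ms n) m' ∧
        ∀ p, ms (n + 1) p ≤ m' p := remIw_stepB (h n (by omega)) hdom
    have hstep : remIwChain N ts ms (n + 1) = hex.choose := by
      rw [remIwChain, dif_pos hex]
    constructor
    · intro i hi
      rcases Nat.lt_succ_iff_lt_or_eq.mp hi with hi | rfl
      · exact ih1 i hi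
      · rw [hstep]; exact hex.choose_spec.1
    · intro i hi p
      rcases Nat.le_succ_iff.mp hi with hi | rfl
      · exact ih2 i hi p
      · rw [hstep]; exact hex.choose_spec.2 p

/-- (a) every execution of `remIω(N)` is an execution of `N`;
(b) every execution of `N` is dominated, step by step, by an execution of
`remIω(N)` over the same transitions; consequently (c) `N` has an infinite
execution from `m₀` iff `remIω(N)` does, i.e. `N` terminates iff `remIω(N)` does. -/
theorem remIw_spec {P : Type} (N : OmegaPN P) :
    (∀ (σ : List N.T) (m m' : P → ℕ), N.remIw.FiresSeq σ m m' → N.FiresSeq σ m m') ∧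
    (∀ (n : ℕ) (ts : ℕ → N.T) (ms : ℕ → P → ℕ),
        (∀ i < n, N.Fires (ts i) (ms i) (ms (i + 1))) →
        ∃ ms' : ℕ → P → ℕ, ms' 0 = ms 0 ∧
          (∀ i < n, N.remIw.Fires (ts i) (ms' i) (ms' (i + 1))) ∧
          ∀ i ≤ n, ∀ p, ms i p ≤ ms' i p) ∧
    (∀ m₀ : P → ℕ,
      (∃ (ts : ℕ → N.T) (ms : ℕ → P → ℕ), ms 0 = m₀ ∧
          ∀ i : ℕ, N.Fires (ts i) (ms i) (ms (i + 1))) ↔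
      (∃ (ts : ℕ → N.T) (ms : ℕ → P → ℕ), ms 0 = m₀ ∧
          ∀ i : ℕ, N.remIw.Fires (ts i) (ms i) (ms (i + 1)))) := by
  refine ⟨fun σ m m' h => remIw_firesSeq h, ?_, ?_⟩
  · intro n ts ms h
    obtain ⟨h1, h2⟩ := remIwChain_spec N ts ms n h
    exact ⟨remIwChain N ts ms, rfl, h1, h2⟩
  · intro m₀
    constructor
    · rintro ⟨ts, ms, hm0, hfire⟩
      refine ⟨ts, remIwChain N ts ms, hm0, fun i => ?_⟩
      exact (remIwChain_spec N ts ms (i + 1) (fun j _ => hfire j)).1 i (by omega)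
    · rintro ⟨ts, ms, hm0, hfire⟩
      exact ⟨ts, ms, hm0, fun i => remIw_fires (hfire i)⟩
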